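/- For every real number v with 0 < v ≤ 1, S(v,v) = (1/2)·Re( Li₃(e^{2i·arcsin v}) ) − ζ(3)/2 + arcsin(v)·Im( Li₂(e^{2i·arcsin v}) ) + (arcsin v)²·log(2v); that is, ∫₀¹ (arcsin(vx))²/x dx equals ( Li₃(e^{2i arcsin v}) + Li₃(e^{−2i arcsin v}) )/4 − ζ(3)/2 + arcsin(v)·( Li₂(e^{2i arcsin v}) − Li₂(e^{−2i arcsin v}) )/(2i) + (arcsin v)² log(2v). -/

import Mathlib

open Real MeasureTheory intervalIntegral

/-- The complex dilogarithm `Li₂(z) = ∑_{n≥1} zⁿ/n²`. -/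
noncomputable def Li2c (z : ℂ) : ℂ := ∑' n : ℕ, z ^ (n + 1) / ((n + 1 : ℕ) : ℂ) ^ 2

/-- The complex trilogarithm `Li₃(z) = ∑_{n≥1} zⁿ/n³`. -/
noncomputable def Li3c (z : ℂ) : ℂ := ∑' n : ℕ, z ^ (n + 1) / ((n + 1 : ℕ) : ℂ) ^ 3

namespace SVV

open Filter Set Complex
open scoped Topology

noncomputable def pl (k : ℕ) (z : ℂ) : ℂ := ∑' n : ℕ, z ^ (n + 1) / ((n + 1 : ℕ) : ℂ) ^ k

lemma sum_inv_sq : Summable (fun n : ℕ => 1 / ((n : ℝ) + 1) ^ 2) := by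
  have h : Summable (fun n : ℕ => 1 / (n : ℝ) ^ 2) :=
    Real.summable_one_div_nat_pow.mpr one_lt_two
  have h2 : Summable (fun n : ℕ => 1 / ((n + 1 : ℕ) : ℝ) ^ 2) :=
    (summable_nat_add_iff (f := fun n : ℕ => 1 / (n : ℝ) ^ 2) 1).mpr h
  exact h2.congr (fun n => by push_cast; ring)

lemma norm_term_le {z : ℂ} (hz : ‖z‖ ≤ 1) {k : ℕ} (hk : 2 ≤ k) (n : ℕ) :
    ‖z ^ (n + 1) / ((n + 1 : ℕ) : ℂ) ^ k‖ ≤ 1 / ((n : ℝ) + 1) ^ 2 := by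
  rw [norm_div, norm_pow, norm_pow, Complex.norm_natCast]
  have h1 : ‖z‖ ^ (n + 1) ≤ 1 := pow_le_one₀ (norm_nonneg z) hz
  have hc : ((n + 1 : ℕ) : ℝ) = (n : ℝ) + 1 := by push_cast; ring
  have h2 : ((n : ℝ) + 1) ^ 2 ≤ ((n + 1 : ℕ) : ℝ) ^ k := by
    rw [hc]
    exact pow_le_pow_right₀ (by linarith [Nat.cast_nonneg (α := ℝ) n]) hk
  exact div_le_div₀ zero_le_one h1 (by positivity) h2

lemma summable_li {k : ℕ} (hk : 2 ≤ k) {z : ℂ} (hz : ‖z‖ ≤ 1) :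
    Summable (fun n : ℕ => z ^ (n + 1) / ((n + 1 : ℕ) : ℂ) ^ k) := by
  refine Summable.of_norm ?_
  exact Summable.of_nonneg_of_le (fun n => norm_nonneg _) (norm_term_le hz hk) sum_inv_sq

lemma tendsto_li {k : ℕ} (hk : 2 ≤ k) {z : ℂ} (hz : ‖z‖ ≤ 1) :
    Tendsto (fun r : ℝ => pl k (↑r * z)) (𝓝[<] (1 : ℝ)) (𝓝 (pl k z)) := by
  simp only [pl]
  have hcont : ContinuousOn
      (fun r : ℝ => ∑' n : ℕ, ((r : ℂ) * z) ^ (n + 1) / ((n + 1 : ℕ) : ℂ) ^ k) (Icc 0 1) := by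
    refine continuousOn_tsum (fun n => ?_) sum_inv_sq (fun n r hr => ?_)
    · exact ((Complex.continuous_ofReal.mul continuous_const).pow _).continuousOn.div_const _
    · refine norm_term_le ?_ hk n
      rw [norm_mul, Complex.norm_real, Real.norm_eq_abs, _root_.abs_of_nonneg hr.1]
      calc r * ‖z‖ ≤ 1 * 1 := by
            apply mul_le_mul hr.2 hz (norm_nonneg z) zero_le_one
        _ = 1 := by norm_num
  have h1 := hcont 1 ⟨zero_le_one, le_refl 1⟩
  have h2 : ((1:ℝ):ℂ) * z = z := by norm_num
  rw [ContinuousWithinAt, h2] at h1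
  refine h1.mono_left ?_
  refine nhdsWithin_le_iff.mpr ?_
  exact mem_of_superset (Ioo_mem_nhdsLT_of_mem (by norm_num : (1:ℝ) ∈ Ioc 0 1))
    Ioo_subset_Icc_self

lemma abs_exp_im (c : ℂ) (hc : c.re = 0) (t : ℝ) : ‖Complex.exp (c * ↑t)‖ = 1 := by
  rw [Complex.norm_exp]
  simp [Complex.mul_re, hc]

lemma hasDerivAt_pl (k : ℕ) {r : ℝ} (hr0 : 0 ≤ r) (hr1 : r < 1) {c : ℂ} (hc : c.re = 0)
    (t : ℝ) :
    HasDerivAt (fun s : ℝ => pl (k + 1) (↑r * Complex.exp (c * ↑s)))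
      (c * pl k (↑r * Complex.exp (c * ↑t))) t := by
  simp only [pl]
  have hexp : ∀ s : ℝ, HasDerivAt (fun s : ℝ => Complex.exp (c * ↑s))
      (c * Complex.exp (c * ↑s)) s := by
    intro s
    have h1 : HasDerivAt (fun z : ℂ => Complex.exp (c * z)) (c * Complex.exp (c * ↑s)) ↑s := by
      have h0 : HasDerivAt (fun z : ℂ => c * z) c ↑s := by
        simpa using (hasDerivAt_id ((s : ℂ))).const_mul c
      simpa [mul_comm, Function.comp_def] using (Complex.hasDerivAt_exp (c * ↑s)).comp (↑s : ℂ) h0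
    exact h1.comp_ofReal
  have hnorm : ∀ s : ℝ, ‖(↑r : ℂ) * Complex.exp (c * ↑s)‖ = r := by
    intro s
    rw [norm_mul, Complex.norm_real, Real.norm_eq_abs, _root_.abs_of_nonneg hr0,
      abs_exp_im c hc, mul_one]
  have hterm : ∀ (n : ℕ) (s : ℝ),
      HasDerivAt (fun s : ℝ => (↑r * Complex.exp (c * ↑s)) ^ (n + 1) / ((n + 1 : ℕ) : ℂ) ^ (k + 1))
        (c * ((↑r * Complex.exp (c * ↑s)) ^ (n + 1) / ((n + 1 : ℕ) : ℂ) ^ k)) s := by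
    intro n s
    have h2 : HasDerivAt (fun s : ℝ => (↑r : ℂ) * Complex.exp (c * ↑s))
        (↑r * (c * Complex.exp (c * ↑s))) s := (hexp s).const_mul _
    have h3 := ((hasDerivAt_pow (n + 1) ((↑r : ℂ) * Complex.exp (c * ↑s))).comp s h2).div_const
      (((n + 1 : ℕ) : ℂ) ^ (k + 1))
    refine h3.congr_deriv ?_
    symm
    have hne : ((n + 1 : ℕ) : ℂ) ≠ 0 := Nat.cast_ne_zero.mpr (Nat.succ_ne_zero n)
    simp only [Nat.add_sub_cancel]
    have key : ((n + 1 : ℕ) : ℂ) * (↑r * Complex.exp (c * ↑s)) ^ n * (↑r * (c * Complex.exp (c * ↑s)))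
        = c * (↑r * Complex.exp (c * ↑s)) ^ (n + 1) * ((n + 1 : ℕ) : ℂ) := by
      rw [pow_succ]; ring
    rw [key, pow_succ ((n + 1 : ℕ) : ℂ) k, mul_div_mul_right _ _ hne, mul_div_assoc]
  have hgeo : Summable (fun n : ℕ => r ^ (n + 1)) := by
    have h := summable_geometric_of_lt_one hr0 hr1
    exact (summable_nat_add_iff (f := fun n : ℕ => r ^ n) 1).mpr h
  have hb : ∀ (n : ℕ) (s : ℝ),
      ‖c * ((↑r * Complex.exp (c * ↑s)) ^ (n + 1) / ((n + 1 : ℕ) : ℂ) ^ k)‖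
        ≤ ‖c‖ * r ^ (n + 1) := by
    intro n s
    rw [norm_mul, norm_div, norm_pow, hnorm s, norm_pow, Complex.norm_natCast]
    have hone : (1 : ℝ) ≤ ((n + 1 : ℕ) : ℝ) ^ k := by
      apply one_le_pow₀
      exact_mod_cast Nat.succ_le_succ (Nat.zero_le n)
    have h4 : r ^ (n + 1) / ((n + 1 : ℕ) : ℝ) ^ k ≤ r ^ (n + 1) :=
      div_le_self (by positivity) hone
    exact mul_le_mul_of_nonneg_left h4 (norm_nonneg c)
  have hsum0 : Summable
      (fun n : ℕ => (↑r * Complex.exp (c * ↑t)) ^ (n + 1) / ((n + 1 : ℕ) : ℂ) ^ (k + 1)) := by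
    refine Summable.of_norm ?_
    refine Summable.of_nonneg_of_le (fun n => norm_nonneg _) (fun n => ?_) hgeo
    rw [norm_div, norm_pow, hnorm t, norm_pow, Complex.norm_natCast]
    have hone : (1 : ℝ) ≤ ((n + 1 : ℕ) : ℝ) ^ (k + 1) := by
      apply one_le_pow₀
      exact_mod_cast Nat.succ_le_succ (Nat.zero_le n)
    exact div_le_self (by positivity) hone
  have H := hasDerivAt_tsum (hgeo.mul_left ‖c‖) (fun n s => hterm n s) hb hsum0 t
  rwa [tsum_mul_left] at H

lemma pl_one_log {r : ℝ} (hr0 : 0 ≤ r) (hr1 : r < 1) {w : ℂ} (hw : ‖w‖ = 1) :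
    pl 1 (↑r * w) = -Complex.log (1 - ↑r * w) := by
  have hn : ‖(↑r : ℂ) * w‖ < 1 := by
    rw [norm_mul, Complex.norm_real, Real.norm_eq_abs, _root_.abs_of_nonneg hr0, hw, mul_one]
    exact hr1
  have h := Complex.hasSum_taylorSeries_neg_log hn
  have hs := h.tsum_eq
  rw [Summable.tsum_eq_zero_add h.summable] at hs
  simp only [pow_zero, Nat.cast_zero, div_zero, zero_add] at hs
  rw [pl, ← hs]
  simp [pow_one]

noncomputable def G (r : ℝ) (t : ℝ) : ℂ :=
  (pl 3 (↑r * Complex.exp (2 * Complex.I * ↑t)) + pl 3 (↑r * Complex.exp (-(2 * Complex.I) * ↑t))) / 4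
    + ↑t * ((pl 2 (↑r * Complex.exp (2 * Complex.I * ↑t)) -
        pl 2 (↑r * Complex.exp (-(2 * Complex.I) * ↑t))) / (2 * Complex.I))

lemma conj_fac (r t : ℝ) :
    1 - ↑r * Complex.exp (-(2 * Complex.I) * ↑t) =
      starRingEnd ℂ (1 - ↑r * Complex.exp (2 * Complex.I * ↑t)) := by
  have h : starRingEnd ℂ (2 * Complex.I * ↑t) = -(2 * Complex.I) * ↑t := by
    simp only [map_mul, Complex.conj_I, Complex.conj_ofReal, map_ofNat]
    ring
  rw [map_sub, map_one, map_mul, ← Complex.exp_conj, h, Complex.conj_ofReal]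

lemma abs_fac_lb {r : ℝ} (hr0 : 0 ≤ r) (t : ℝ) :
    1 - r ≤ ‖1 - ↑r * Complex.exp (2 * Complex.I * ↑t)‖ := by
  have h1 : ‖(↑r * Complex.exp (2 * Complex.I * ↑t))‖ = |r| := by
    rw [norm_mul, Complex.norm_real, Real.norm_eq_abs,
      abs_exp_im (2 * Complex.I) (by simp) t, mul_one]
  have h2 := norm_sub_norm_le (1 : ℂ) (↑r * Complex.exp (2 * Complex.I * ↑t))
  rw [norm_one, h1] at h2
  rw [_root_.abs_of_nonneg hr0] at h2
  linarith

lemma re_fac_pos {r : ℝ} (hr0 : 0 ≤ r) (hr1 : r < 1) (t : ℝ) :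
    0 < (1 - ↑r * Complex.exp (2 * Complex.I * ↑t)).re := by
  have h1 : |(Complex.exp (2 * Complex.I * ↑t)).re| ≤ 1 := by
    have := Complex.abs_re_le_norm (Complex.exp (2 * Complex.I * ↑t))
    rwa [abs_exp_im (2 * Complex.I) (by simp) t] at this
  have h2 : (1 - ↑r * Complex.exp (2 * Complex.I * ↑t)).re
      = 1 - r * (Complex.exp (2 * Complex.I * ↑t)).re := by
    simp [Complex.sub_re, Complex.mul_re]
  rw [h2]
  have := abs_le.mp h1
  nlinarith

lemma log_sum {r : ℝ} (hr0 : 0 ≤ r) (hr1 : r < 1) (t : ℝ) :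
    Complex.log (1 - ↑r * Complex.exp (2 * Complex.I * ↑t)) +
      Complex.log (1 - ↑r * Complex.exp (-(2 * Complex.I) * ↑t)) =
      ((2 * Real.log (‖1 - ↑r * Complex.exp (2 * Complex.I * ↑t)‖) : ℝ) : ℂ) := by
  rw [conj_fac r t, Complex.log_conj, Complex.add_conj, Complex.log_re]
  intro h
  rw [Complex.arg_eq_pi_iff] at h
  linarith [re_fac_pos hr0 hr1 t, h.1]

lemma alg (a b x y L t : ℂ) (hval : x + y = 2 * L) :
    -(2 * t * L) = (2 * Complex.I * a + -(2 * Complex.I) * b) / 4 +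
      (1 * ((a - b) / (2 * Complex.I)) +
        t * ((2 * Complex.I * -x - -(2 * Complex.I) * -y) / (2 * Complex.I))) := by
  have hy : y = 2 * L - x := by linear_combination hval
  subst hy
  field_simp
  ring_nf
  simp only [Complex.I_sq]
  ring

lemma hasDerivAt_G {r : ℝ} (hr0 : 0 ≤ r) (hr1 : r < 1) (t : ℝ) :
    HasDerivAt (G r)
      ((-(2 * t * Real.log (‖1 - ↑r * Complex.exp (2 * Complex.I * ↑t)‖)) : ℝ) : ℂ) t := by
  have hc1 : (2 * Complex.I).re = 0 := by simp
  have hc2 : (-(2 * Complex.I)).re = 0 := by simp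
  have h3p : HasDerivAt (fun s : ℝ => pl 3 (↑r * Complex.exp (2 * Complex.I * ↑s)))
      (2 * Complex.I * pl 2 (↑r * Complex.exp (2 * Complex.I * ↑t))) t :=
    hasDerivAt_pl 2 hr0 hr1 hc1 t
  have h3m : HasDerivAt (fun s : ℝ => pl 3 (↑r * Complex.exp (-(2 * Complex.I) * ↑s)))
      (-(2 * Complex.I) * pl 2 (↑r * Complex.exp (-(2 * Complex.I) * ↑t))) t :=
    hasDerivAt_pl 2 hr0 hr1 hc2 t
  have h2p : HasDerivAt (fun s : ℝ => pl 2 (↑r * Complex.exp (2 * Complex.I * ↑s)))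
      (2 * Complex.I * pl 1 (↑r * Complex.exp (2 * Complex.I * ↑t))) t :=
    hasDerivAt_pl 1 hr0 hr1 hc1 t
  have h2m : HasDerivAt (fun s : ℝ => pl 2 (↑r * Complex.exp (-(2 * Complex.I) * ↑s)))
      (-(2 * Complex.I) * pl 1 (↑r * Complex.exp (-(2 * Complex.I) * ↑t))) t :=
    hasDerivAt_pl 1 hr0 hr1 hc2 t
  rw [pl_one_log hr0 hr1 (abs_exp_im _ hc1 t)] at h2p
  rw [pl_one_log hr0 hr1 (abs_exp_im _ hc2 t)] at h2m
  have hof : HasDerivAt (fun s : ℝ => (s : ℂ)) 1 t := Complex.ofRealCLM.hasDerivAt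
  have hd1 := (h3p.add h3m).div_const (4 : ℂ)
  have hd2 := hof.mul ((h2p.sub h2m).div_const (2 * Complex.I))
  have hD := hd1.add hd2
  have hval := log_sum hr0 hr1 t
  have hfinal : HasDerivAt (G r)
      ((2 * Complex.I * pl 2 (↑r * Complex.exp (2 * Complex.I * ↑t)) +
          -(2 * Complex.I) * pl 2 (↑r * Complex.exp (-(2 * Complex.I) * ↑t))) / 4 +
        (1 * ((pl 2 (↑r * Complex.exp (2 * Complex.I * ↑t)) -
            pl 2 (↑r * Complex.exp (-(2 * Complex.I) * ↑t))) / (2 * Complex.I)) +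
          ↑t * ((2 * Complex.I * -Complex.log (1 - ↑r * Complex.exp (2 * Complex.I * ↑t)) -
              -(2 * Complex.I) * -Complex.log (1 - ↑r * Complex.exp (-(2 * Complex.I) * ↑t))) /
            (2 * Complex.I)))) t := hD
  convert hfinal using 1
  push_cast at hval ⊢
  exact alg _ _ _ _ _ _ hval

lemma ftc_G {r : ℝ} (hr0 : 0 ≤ r) (hr1 : r < 1) (θ : ℝ) :
    ((∫ t in (0:ℝ)..θ, 2 * t * Real.log (‖1 - ↑r * Complex.exp (2 * Complex.I * ↑t)‖) : ℝ) : ℂ)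
      = G r 0 - G r θ := by
  have habs : Continuous fun t : ℝ => ‖1 - ↑r * Complex.exp (2 * Complex.I * ↑t)‖ := by
    apply continuous_norm.comp
    fun_prop
  have hne : ∀ t : ℝ, ‖1 - ↑r * Complex.exp (2 * Complex.I * ↑t)‖ ≠ 0 := by
    intro t
    have := abs_fac_lb hr0 t
    intro h; rw [h] at this; linarith
  have hcont : Continuous fun t : ℝ =>
      ((-(2 * t * Real.log (‖1 - ↑r * Complex.exp (2 * Complex.I * ↑t)‖)) : ℝ) : ℂ) := by
    apply Complex.continuous_ofReal.comp
    apply Continuous.neg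
    exact (continuous_const.mul continuous_id).mul (habs.log hne)
  have hFTC := integral_eq_sub_of_hasDerivAt (f := G r)
    (fun t _ => hasDerivAt_G hr0 hr1 t) (hcont.intervalIntegrable 0 θ)
  rw [intervalIntegral.integral_ofReal] at hFTC
  rw [intervalIntegral.integral_neg] at hFTC
  push_cast at hFTC
  linear_combination -hFTC

lemma abs_sq_fac (r t : ℝ) :
    ‖1 - ↑r * Complex.exp (2 * Complex.I * ↑t)‖ ^ 2
      = (1 - r) ^ 2 + 4 * r * Real.sin t ^ 2 := by
  rw [Complex.sq_norm]
  have h : 2 * Complex.I * (t : ℂ) = ((2 * t : ℝ) : ℂ) * Complex.I := by push_cast; ring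
  rw [h, Complex.exp_mul_I, ← Complex.ofReal_cos, ← Complex.ofReal_sin]
  simp only [Complex.normSq_apply, Complex.sub_re, Complex.sub_im, Complex.mul_re,
    Complex.mul_im, Complex.add_re, Complex.add_im, Complex.I_re, Complex.I_im,
    Complex.ofReal_re, Complex.ofReal_im, Complex.one_re, Complex.one_im]
  have h1 : Real.sin (2 * t) ^ 2 + Real.cos (2 * t) ^ 2 = 1 := Real.sin_sq_add_cos_sq (2 * t)
  have h2 : Real.cos (2 * t) = 2 * Real.cos t ^ 2 - 1 := Real.cos_two_mul t
  have h3 : Real.sin t ^ 2 + Real.cos t ^ 2 = 1 := Real.sin_sq_add_cos_sq t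
  linear_combination (r ^ 2) * h1 + (-2 * r) * h2 + (-4 * r) * h3

lemma abs_fac_one {t : ℝ} (h0 : 0 ≤ t) (hπ : t ≤ π) :
    ‖1 - Complex.exp (2 * Complex.I * ↑t)‖ = 2 * Real.sin t := by
  have h := abs_sq_fac 1 t
  simp only [Complex.ofReal_one, one_mul, sub_self] at h
  have h2 : ‖1 - Complex.exp (2 * Complex.I * ↑t)‖ ^ 2 = (2 * Real.sin t) ^ 2 := by
    rw [h]; ring
  have h3 : 0 ≤ 2 * Real.sin t := by
    have := Real.sin_nonneg_of_nonneg_of_le_pi h0 hπ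
    linarith
  rw [← Real.sqrt_sq (norm_nonneg _), h2, Real.sqrt_sq h3]

lemma abs_log_le {t : ℝ} (ht : 0 < t) (ht2 : t ≤ 2) :
    |Real.log t| ≤ 2 * t ^ (-(1/2 : ℝ)) := by
  have hpos : 0 < t ^ (-(1/2 : ℝ)) := Real.rpow_pos_of_pos ht _
  rcases le_or_gt 1 t with h | h
  · rw [_root_.abs_of_nonneg (Real.log_nonneg h)]
    have h1 : Real.log t ≤ t - 1 := Real.log_le_sub_one_of_pos ht
    have h2 : t ^ ((1:ℝ)/2) ≤ 2 := by
      calc t ^ ((1:ℝ)/2) ≤ 2 ^ ((1:ℝ)/2) :=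
            Real.rpow_le_rpow ht.le ht2 (by norm_num)
        _ ≤ 2 ^ ((1:ℝ)) := by
            apply Real.rpow_le_rpow_of_exponent_le (by norm_num) (by norm_num)
        _ = 2 := by rw [Real.rpow_one]
    have hmul : t ^ (-(1/2 : ℝ)) * t ^ ((1:ℝ)/2) = 1 := by
      rw [← Real.rpow_add ht]; norm_num
    have h3 : (1:ℝ) ≤ 2 * t ^ (-(1/2 : ℝ)) := by nlinarith
    linarith
  · rw [_root_.abs_of_nonpos (Real.log_nonpos ht.le h.le)]
    have h1 : Real.log (t ^ (-(1/2:ℝ))) ≤ t ^ (-(1/2:ℝ)) - 1 :=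
      Real.log_le_sub_one_of_pos hpos
    rw [Real.log_rpow ht] at h1
    nlinarith

lemma cont_F {r : ℝ} (hr0 : 0 ≤ r) (hr1 : r < 1) :
    Continuous (fun t : ℝ =>
      2 * t * Real.log (‖1 - ↑r * Complex.exp (2 * Complex.I * ↑t)‖)) := by
  have habs : Continuous fun t : ℝ => ‖1 - ↑r * Complex.exp (2 * Complex.I * ↑t)‖ := by
    apply continuous_norm.comp
    fun_prop
  have hne : ∀ t : ℝ, ‖1 - ↑r * Complex.exp (2 * Complex.I * ↑t)‖ ≠ 0 := by
    intro t
    have := abs_fac_lb hr0 t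
    intro h; rw [h] at this; linarith
  exact (continuous_const.mul continuous_id).mul (habs.log hne)

set_option maxHeartbeats 1000000 in
lemma tendsto_J {θ : ℝ} (hθ0 : 0 < θ) (hθ : θ ≤ π / 2) :
    Tendsto (fun r : ℝ =>
        ∫ t in (0:ℝ)..θ, 2 * t * Real.log (‖1 - ↑r * Complex.exp (2 * Complex.I * ↑t)‖))
      (𝓝[<] (1 : ℝ)) (𝓝 (∫ t in (0:ℝ)..θ, 2 * t * Real.log (2 * Real.sin t))) := by
  have hπ4 : π ≤ 4 := Real.pi_le_four
  have hπ0 : 0 < π := Real.pi_pos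
  have hmem : Ioo (1/2 : ℝ) 1 ∈ 𝓝[<] (1 : ℝ) :=
    Ioo_mem_nhdsLT_of_mem (by norm_num : (1:ℝ) ∈ Ioc (1/2) 1)
  refine intervalIntegral.tendsto_integral_filter_of_dominated_convergence
    (bound := fun t => 2 * θ * (2 * t ^ (-(1/2 : ℝ)) + 2 * Real.log 2)) ?_ ?_ ?_ ?_
  · filter_upwards [hmem] with r hr
    exact (cont_F (by linarith [hr.1]) hr.2).aestronglyMeasurable
  · filter_upwards [hmem] with r hr
    refine Filter.Eventually.of_forall fun t ht => ?_
    rw [uIoc_of_le hθ0.le] at ht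
    set A := ‖1 - ↑r * Complex.exp (2 * Complex.I * ↑t)‖ with hA
    have hr0 : (0:ℝ) ≤ r := by linarith [hr.1]
    have ht0 : 0 < t := ht.1
    have htθ : t ≤ θ := ht.2
    have htπ : t ≤ π / 2 := le_trans htθ hθ
    have hsin0 : 0 ≤ Real.sin t := Real.sin_nonneg_of_nonneg_of_le_pi ht0.le (by linarith)
    have hsinlb : t / 2 ≤ Real.sin t := by
      have := Real.mul_le_sin ht0.le htπ
      have h2π : 1 / 2 ≤ 2 / π := by
        rw [div_le_div_iff₀ (by norm_num) hπ0]
        linarith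
      nlinarith
    have hAsq := abs_sq_fac r t
    rw [← hA] at hAsq
    have hA0 : 0 ≤ A := norm_nonneg _
    have hAlbsin : Real.sin t ≤ A := by
      nlinarith [sq_nonneg (1 - r), sq_nonneg (Real.sin t), hr.1]
    have hAlb : t / 2 ≤ A := le_trans hsinlb hAlbsin
    have hAub : A ≤ 2 := by
      have h1 : ‖(1:ℂ) - ↑r * Complex.exp (2 * Complex.I * ↑t)‖
          ≤ ‖(1:ℂ)‖ + ‖(↑r : ℂ) * Complex.exp (2 * Complex.I * ↑t)‖ := norm_sub_le _ _
      rw [norm_one, norm_mul, Complex.norm_real, Real.norm_eq_abs, _root_.abs_of_nonneg hr0,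
        abs_exp_im (2 * Complex.I) (by simp) t, mul_one] at h1
      rw [hA]
      linarith [hr.2.le]
    have hlogA_lb : Real.log (t / 2) ≤ Real.log A :=
      Real.log_le_log (by positivity) hAlb
    have hlogA_ub : Real.log A ≤ Real.log 2 :=
      Real.log_le_log (lt_of_lt_of_le (by positivity) hAlb) hAub
    have hlogt2 : Real.log (t / 2) = Real.log t - Real.log 2 :=
      Real.log_div (ne_of_gt ht0) (by norm_num)
    have hlog2 : (0:ℝ) ≤ Real.log 2 := Real.log_nonneg (by norm_num)
    have habsA : |Real.log A| ≤ |Real.log t| + 2 * Real.log 2 := by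
      rw [abs_le]
      constructor
      · rw [hlogt2] at hlogA_lb
        linarith [neg_abs_le (Real.log t)]
      · linarith [abs_nonneg (Real.log t)]
    have hlogt : |Real.log t| ≤ 2 * t ^ (-(1/2 : ℝ)) := abs_log_le ht0 (by linarith)
    rw [Real.norm_eq_abs, abs_mul, _root_.abs_of_nonneg (by linarith : (0:ℝ) ≤ 2 * t)]
    calc 2 * t * |Real.log A| ≤ 2 * θ * (|Real.log t| + 2 * Real.log 2) := by
          apply mul_le_mul (by linarith) habsA (abs_nonneg _) (by linarith)
      _ ≤ 2 * θ * (2 * t ^ (-(1/2 : ℝ)) + 2 * Real.log 2) := by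
          apply mul_le_mul_of_nonneg_left (by linarith) (by linarith)
  · apply IntervalIntegrable.const_mul
    apply IntervalIntegrable.add
    · exact (intervalIntegral.intervalIntegrable_rpow' (by norm_num)).const_mul 2
    · exact intervalIntegrable_const
  · refine Filter.Eventually.of_forall fun t ht => ?_
    rw [uIoc_of_le hθ0.le] at ht
    have hsinpos : 0 < Real.sin t := Real.sin_pos_of_pos_of_lt_pi ht.1 (by linarith [ht.2])
    have hval : ‖1 - ↑(1:ℝ) * Complex.exp (2 * Complex.I * ↑t)‖ = 2 * Real.sin t := by
      rw [Complex.ofReal_one, one_mul]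
      exact abs_fac_one ht.1.le (by linarith [ht.2])
    have hC : Continuous (fun r : ℝ => ‖1 - ↑r * Complex.exp (2 * Complex.I * ↑t)‖) :=
      continuous_norm.comp
        (continuous_const.sub (Complex.continuous_ofReal.mul continuous_const))
    have h_abs : Tendsto (fun r : ℝ => ‖1 - ↑r * Complex.exp (2 * Complex.I * ↑t)‖)
        (𝓝 (1:ℝ)) (𝓝 (2 * Real.sin t)) := by
      have := hC.continuousAt (x := (1:ℝ))
      rwa [ContinuousAt, hval] at this
    have h_log : Tendsto Real.log (𝓝 (2 * Real.sin t)) (𝓝 (Real.log (2 * Real.sin t))) :=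
      (Real.continuousAt_log (by positivity)).tendsto
    have hcomb : Tendsto
        (fun r : ℝ => 2 * t * Real.log (‖1 - ↑r * Complex.exp (2 * Complex.I * ↑t)‖))
        (𝓝 (1:ℝ)) (𝓝 (2 * t * Real.log (2 * Real.sin t))) :=
      tendsto_const_nhds.mul (h_log.comp h_abs)
    exact hcomb.mono_left nhdsWithin_le_nhds

lemma tendsto_G (θ : ℝ) : Tendsto (fun r : ℝ => G r θ) (𝓝[<] (1 : ℝ)) (𝓝 (G 1 θ)) := by
  have e1 : ‖Complex.exp (2 * Complex.I * ↑θ)‖ ≤ 1 := le_of_eq (abs_exp_im _ (by simp) θ)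
  have e2 : ‖Complex.exp (-(2 * Complex.I) * ↑θ)‖ ≤ 1 := le_of_eq (abs_exp_im _ (by simp) θ)
  have t3p := tendsto_li (k := 3) (by norm_num) e1
  have t3m := tendsto_li (k := 3) (by norm_num) e2
  have t2p := tendsto_li (k := 2) (by norm_num) e1
  have t2m := tendsto_li (k := 2) (by norm_num) e2
  have comb := ((t3p.add t3m).div_const (4 : ℂ)).add
    (((t2p.sub t2m).div_const (2 * Complex.I)).const_mul (↑θ : ℂ))
  convert comb using 2
  all_goals simp [G]

lemma J_eq {θ : ℝ} (hθ0 : 0 < θ) (hθ : θ ≤ π / 2) :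
    ((∫ t in (0:ℝ)..θ, 2 * t * Real.log (2 * Real.sin t) : ℝ) : ℂ) = G 1 0 - G 1 θ := by
  have h1 := tendsto_J hθ0 hθ
  have h4 : Tendsto (fun r : ℝ =>
      ((∫ t in (0:ℝ)..θ, 2 * t * Real.log (‖1 - ↑r * Complex.exp (2 * Complex.I * ↑t)‖) : ℝ) : ℂ))
      (𝓝[<] (1:ℝ)) (𝓝 ((∫ t in (0:ℝ)..θ, 2 * t * Real.log (2 * Real.sin t) : ℝ) : ℂ)) :=
    (Complex.continuous_ofReal.tendsto _).comp h1
  have h2 : Tendsto (fun r : ℝ =>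
      ((∫ t in (0:ℝ)..θ, 2 * t * Real.log (‖1 - ↑r * Complex.exp (2 * Complex.I * ↑t)‖) : ℝ) : ℂ))
      (𝓝[<] (1:ℝ)) (𝓝 (G 1 0 - G 1 θ)) := by
    have h3 : Tendsto (fun r : ℝ => G r 0 - G r θ) (𝓝[<] (1:ℝ)) (𝓝 (G 1 0 - G 1 θ)) :=
      (tendsto_G 0).sub (tendsto_G θ)
    apply h3.congr'
    filter_upwards [Ioo_mem_nhdsLT_of_mem (by norm_num : (1:ℝ) ∈ Ioc 0 1)] with r hr
    exact (ftc_G hr.1.le hr.2 θ).symm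
  exact tendsto_nhds_unique h4 h2

lemma tendsto_div_sin : Tendsto (fun t : ℝ => t / Real.sin t) (𝓝[≠] 0) (𝓝 1) := by
  have h : HasDerivAt Real.sin 1 0 := by simpa using Real.hasDerivAt_sin 0
  have h2 := hasDerivAt_iff_tendsto_slope.mp h
  have h3 : Tendsto (fun t : ℝ => Real.sin t / t) (𝓝[≠] 0) (𝓝 1) := by
    refine h2.congr fun t => ?_
    rw [slope_def_field, Real.sin_zero, sub_zero, sub_zero]
  have h4 := h3.inv₀ one_ne_zero
  simp only [inv_div, inv_one] at h4
  exact h4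

lemma contOn_tcot {θ : ℝ} (hθ : θ ≤ π / 2) :
    ContinuousOn (fun t : ℝ => t ^ 2 * (Real.cos t / Real.sin t)) (Icc 0 θ) := by
  intro u hu
  rcases eq_or_ne u 0 with rfl | hne
  · rw [← continuousWithinAt_diff_self]
    rw [ContinuousWithinAt, show (0:ℝ) ^ 2 * (Real.cos 0 / Real.sin 0) = 0 by simp]
    have hmem : ∀ t ∈ Icc (0:ℝ) θ \ {0}, t ^ 2 * (Real.cos t / Real.sin t)
        = (t / Real.sin t) * (t * Real.cos t) := by
      intro t ht
      ring
    have hsub : Icc (0:ℝ) θ \ {0} ⊆ {0}ᶜ := fun x hx => hx.2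
    have h1 : Tendsto (fun t : ℝ => t / Real.sin t) (𝓝[Icc (0:ℝ) θ \ {0}] 0) (𝓝 1) :=
      tendsto_div_sin.mono_left (nhdsWithin_mono _ hsub)
    have h2 : Tendsto (fun t : ℝ => t * Real.cos t) (𝓝[Icc (0:ℝ) θ \ {0}] 0) (𝓝 0) := by
      have : Continuous (fun t : ℝ => t * Real.cos t) := continuous_id.mul Real.continuous_cos
      exact (this.tendsto' 0 0 (by simp)).mono_left
        (nhdsWithin_le_nhds (s := Icc (0:ℝ) θ \ {0}))
    have := h1.mul h2
    rw [mul_zero] at this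
    refine this.congr' ?_
    filter_upwards [self_mem_nhdsWithin] with t ht
    exact (hmem t ht).symm
  · have h0 : 0 < u := lt_of_le_of_ne hu.1 (Ne.symm hne)
    have hπ : u < π := by
      have := hu.2
      have := Real.pi_pos
      linarith
    have hsin : Real.sin u ≠ 0 := ne_of_gt (Real.sin_pos_of_pos_of_lt_pi h0 hπ)
    exact ((continuous_pow 2).continuousAt.mul
      ((Real.continuous_cos.continuousAt).div (Real.continuous_sin.continuousAt)
        hsin)).continuousWithinAt

lemma contOn_tlog {θ : ℝ} (hθ : θ ≤ π / 2) :
    ContinuousOn (fun t : ℝ => t * Real.log (2 * Real.sin t)) (Icc 0 θ) := by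
  intro u hu
  rcases eq_or_ne u 0 with rfl | hne
  · rw [← continuousWithinAt_diff_self]
    rw [ContinuousWithinAt, show (0:ℝ) * Real.log (2 * Real.sin 0) = 0 by simp]
    have hsub : Icc (0:ℝ) θ \ {0} ⊆ {0}ᶜ := fun x hx => hx.2
    have h1 : Tendsto (fun t : ℝ => t / Real.sin t) (𝓝[Icc (0:ℝ) θ \ {0}] 0) (𝓝 1) :=
      tendsto_div_sin.mono_left (nhdsWithin_mono _ hsub)
    have hxlogx : Tendsto (fun x : ℝ => Real.log x * x) (𝓝[>] 0) (𝓝 0) := by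
      have := tendsto_log_mul_rpow_nhdsGT_zero one_pos
      refine this.congr fun x => ?_
      rw [Real.rpow_one]
    have hsin2 : Tendsto (fun t : ℝ => 2 * Real.sin t) (𝓝[Icc (0:ℝ) θ \ {0}] 0) (𝓝[>] 0) := by
      rw [tendsto_nhdsWithin_iff]
      constructor
      · have : Continuous (fun t : ℝ => 2 * Real.sin t) := continuous_const.mul Real.continuous_sin
        exact (this.tendsto' 0 0 (by simp)).mono_left nhdsWithin_le_nhds
      · filter_upwards [self_mem_nhdsWithin] with t ht
        have h0 : 0 < t := lt_of_le_of_ne ht.1.1 (Ne.symm ht.2)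
        have hπ : t < π := by
          have := ht.1.2
          have := Real.pi_pos
          linarith [hθ]
        have := Real.sin_pos_of_pos_of_lt_pi h0 hπ
        simp only [mem_Ioi]
        linarith
    have h2 : Tendsto (fun t : ℝ => Real.log (2 * Real.sin t) * (2 * Real.sin t))
        (𝓝[Icc (0:ℝ) θ \ {0}] 0) (𝓝 0) := hxlogx.comp hsin2
    have hcomb := (h1.mul h2).div_const (2 : ℝ)
    rw [one_mul, zero_div] at hcomb
    refine hcomb.congr' ?_
    filter_upwards [self_mem_nhdsWithin] with t ht
    have h0 : 0 < t := lt_of_le_of_ne ht.1.1 (Ne.symm ht.2)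
    have hπ : t < π := by
      have := ht.1.2
      have := Real.pi_pos
      linarith [hθ]
    have hsin : Real.sin t ≠ 0 := ne_of_gt (Real.sin_pos_of_pos_of_lt_pi h0 hπ)
    field_simp
  · have h0 : 0 < u := lt_of_le_of_ne hu.1 (Ne.symm hne)
    have hπ : u < π := by
      have := hu.2
      have := Real.pi_pos
      linarith
    have hsin : 0 < Real.sin u := Real.sin_pos_of_pos_of_lt_pi h0 hπ
    have hne2 : 2 * Real.sin u ≠ 0 := by positivity
    exact (continuous_id.continuousAt.mul
      (ContinuousAt.comp (g := Real.log) (f := fun t : ℝ => 2 * Real.sin t)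
        (Real.continuousAt_log hne2)
        ((continuous_const.mul Real.continuous_sin).continuousAt))).continuousWithinAt

lemma ibp {θ : ℝ} (hθ0 : 0 < θ) (hθ : θ ≤ π / 2) :
    ∫ t in (0:ℝ)..θ, t ^ 2 * (Real.cos t / Real.sin t)
      = θ ^ 2 * Real.log (2 * Real.sin θ) - ∫ t in (0:ℝ)..θ, 2 * t * Real.log (2 * Real.sin t) := by
  have hcont : ContinuousOn (fun t : ℝ => t ^ 2 * Real.log (2 * Real.sin t)) (Icc 0 θ) := by
    refine (continuousOn_id.mul (contOn_tlog hθ)).congr fun t _ => ?_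
    simp only [Pi.mul_apply, id]
    ring
  have hderiv : ∀ t ∈ Ioo (0:ℝ) θ, HasDerivAt (fun t : ℝ => t ^ 2 * Real.log (2 * Real.sin t))
      (2 * t * Real.log (2 * Real.sin t) + t ^ 2 * (Real.cos t / Real.sin t)) t := by
    intro t ht
    have hπ : t < π := by
      have := Real.pi_pos
      linarith [ht.2]
    have hsin : 0 < Real.sin t := Real.sin_pos_of_pos_of_lt_pi ht.1 hπ
    have h1 : HasDerivAt (fun t : ℝ => 2 * Real.sin t) (2 * Real.cos t) t :=
      (Real.hasDerivAt_sin t).const_mul 2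
    have h2 : HasDerivAt (fun t : ℝ => Real.log (2 * Real.sin t))
        ((2 * Real.sin t)⁻¹ * (2 * Real.cos t)) t :=
      (Real.hasDerivAt_log (by positivity)).comp t h1
    have h3 : HasDerivAt (fun t : ℝ => t ^ 2) (2 * t) t := by
      simpa using hasDerivAt_pow 2 t
    have h4 := h3.mul h2
    refine h4.congr_deriv ?_
    symm
    have : Real.sin t ≠ 0 := ne_of_gt hsin
    field_simp
  have hint1 : IntervalIntegrable (fun t : ℝ => 2 * t * Real.log (2 * Real.sin t)) volume 0 θ := by
    apply ContinuousOn.intervalIntegrable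
    rw [uIcc_of_le hθ0.le]
    refine ((contOn_tlog hθ).const_smul (2:ℝ)).congr fun t _ => ?_
    simp only [Pi.smul_apply, smul_eq_mul]
    ring
  have hint2 : IntervalIntegrable (fun t : ℝ => t ^ 2 * (Real.cos t / Real.sin t)) volume 0 θ := by
    apply ContinuousOn.intervalIntegrable
    rw [uIcc_of_le hθ0.le]
    exact contOn_tcot hθ
  have hFTC := integral_eq_sub_of_hasDeriv_right_of_le hθ0.le hcont
    (fun t ht => (hderiv t ht).hasDerivWithinAt) (hint1.add hint2)
  rw [intervalIntegral.integral_add hint1 hint2] at hFTC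
  have hzero : (0:ℝ) ^ 2 * Real.log (2 * Real.sin 0) = 0 := by simp
  rw [hzero, sub_zero] at hFTC
  linarith

lemma subst1 {v : ℝ} (hv0 : 0 < v) :
    ∫ x in (0:ℝ)..1, (Real.arcsin (v * x)) ^ 2 / x
      = ∫ u in (0:ℝ)..v, (Real.arcsin u) ^ 2 / u := by
  have hfun : ∀ x : ℝ, (Real.arcsin (v * x)) ^ 2 / x
      = v • ((fun u : ℝ => (Real.arcsin u) ^ 2 / u) (v * x)) := by
    intro x
    rcases eq_or_ne x 0 with rfl | hx
    · simp
    · simp only [smul_eq_mul]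
      have hv : v ≠ 0 := ne_of_gt hv0
      field_simp
  simp_rw [hfun]
  rw [intervalIntegral.integral_smul,
    intervalIntegral.smul_integral_comp_mul_left (fun u : ℝ => (Real.arcsin u) ^ 2 / u) v]
  norm_num

lemma contOn_g : ContinuousOn (fun u : ℝ => (Real.arcsin u) ^ 2 / u) (Icc 0 1) := by
  intro u hu
  rcases eq_or_ne u 0 with rfl | hne
  · rw [← continuousWithinAt_diff_self]
    rw [ContinuousWithinAt, show (Real.arcsin 0) ^ 2 / 0 = 0 by simp]
    have hsub : Icc (0:ℝ) 1 \ {0} ⊆ {0}ᶜ := fun x hx => hx.2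
    have hslope : Tendsto (fun u : ℝ => Real.arcsin u / u) (𝓝[≠] 0) (𝓝 1) := by
      have h : HasDerivAt Real.arcsin 1 0 := by
        have := Real.hasDerivAt_arcsin (by norm_num : (0:ℝ) ≠ -1) (by norm_num : (0:ℝ) ≠ 1)
        simpa using this
      have h2 := hasDerivAt_iff_tendsto_slope.mp h
      refine h2.congr fun u => ?_
      rw [slope_def_field, Real.arcsin_zero, sub_zero, sub_zero]
    have h1 : Tendsto (fun u : ℝ => Real.arcsin u / u) (𝓝[Icc (0:ℝ) 1 \ {0}] 0) (𝓝 1) :=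
      hslope.mono_left (nhdsWithin_mono _ hsub)
    have h2 : Tendsto (fun u : ℝ => Real.arcsin u) (𝓝[Icc (0:ℝ) 1 \ {0}] 0) (𝓝 0) := by
      have h3 := (Real.continuous_arcsin.tendsto' 0 0 (by simp)).mono_left
        (nhdsWithin_le_nhds (s := Icc (0:ℝ) 1 \ {0}))
      exact h3
    have hcomb := h2.mul h1
    rw [zero_mul] at hcomb
    refine hcomb.congr' ?_
    filter_upwards [self_mem_nhdsWithin] with u hu
    rw [pow_two, mul_div_assoc]
  · have : ContinuousAt (fun u : ℝ => (Real.arcsin u) ^ 2 / u) u :=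
      ((Real.continuous_arcsin.continuousAt).pow 2).div continuousAt_id hne
    exact this.continuousWithinAt

lemma subst2 {v : ℝ} (hv0 : 0 < v) (hv1 : v ≤ 1) :
    ∫ u in (0:ℝ)..v, (Real.arcsin u) ^ 2 / u
      = ∫ t in (0:ℝ)..(Real.arcsin v), t ^ 2 * (Real.cos t / Real.sin t) := by
  have hθ0 : 0 < Real.arcsin v := Real.arcsin_pos.mpr hv0
  have hθπ : Real.arcsin v ≤ π / 2 := Real.arcsin_le_pi_div_two v
  have himg : Real.sin '' (uIcc (0:ℝ) (Real.arcsin v)) ⊆ Icc 0 1 := by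
    rw [uIcc_of_le hθ0.le]
    rintro x ⟨t, ht, rfl⟩
    have hπ : t ≤ π := by
      have := Real.pi_pos
      linarith [ht.2, hθπ]
    exact ⟨Real.sin_nonneg_of_nonneg_of_le_pi ht.1 hπ, Real.sin_le_one t⟩
  have h := intervalIntegral.integral_comp_smul_deriv'
    (f := Real.sin) (f' := Real.cos) (g := fun u : ℝ => (Real.arcsin u) ^ 2 / u)
    (a := 0) (b := Real.arcsin v)
    (fun x _ => Real.hasDerivAt_sin x) Real.continuous_cos.continuousOn
    (contOn_g.mono himg)
  rw [Real.sin_zero, Real.sin_arcsin (by linarith) hv1] at h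
  rw [← h]
  apply intervalIntegral.integral_congr
  intro t ht
  rw [uIcc_of_le hθ0.le] at ht
  have harc : Real.arcsin (Real.sin t) = t := by
    apply Real.arcsin_sin
    · linarith [ht.1, Real.pi_pos]
    · linarith [ht.2, hθπ]
  simp only [smul_eq_mul, Function.comp]
  rw [harc]
  ring

lemma G_one_zero : G 1 0 = ((∑' n : ℕ, 1 / ((n : ℝ) + 1) ^ 3 : ℝ) : ℂ) / 2 := by
  have h : G 1 0 = pl 3 1 / 2 := by
    simp [G]
    ring
  rw [h]
  congr 1
  rw [Complex.ofReal_tsum, pl]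
  refine tsum_congr fun n => ?_
  push_cast
  norm_num

end SVV

theorem S_v_v_closed_form (v : ℝ) (hv0 : 0 < v) (hv1 : v ≤ 1) :
    ((∫ x in (0:ℝ)..1, (Real.arcsin (v * x)) ^ 2 / x : ℝ) : ℂ) =
      (Li3c (Complex.exp (2 * Complex.I * (Real.arcsin v : ℂ))) +
        Li3c (Complex.exp (-(2 * Complex.I * (Real.arcsin v : ℂ))))) / 4
      - ((∑' n : ℕ, 1 / ((n : ℝ) + 1) ^ 3 : ℝ) : ℂ) / 2
      + (Real.arcsin v : ℂ) *
          ((Li2c (Complex.exp (2 * Complex.I * (Real.arcsin v : ℂ))) -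
            Li2c (Complex.exp (-(2 * Complex.I * (Real.arcsin v : ℂ))))) /
            (2 * Complex.I))
      + ((Real.arcsin v : ℂ)) ^ 2 * ((Real.log (2 * v) : ℝ) : ℂ) := by
  have hθ0 : 0 < Real.arcsin v := Real.arcsin_pos.mpr hv0
  have hθπ : Real.arcsin v ≤ π / 2 := Real.arcsin_le_pi_div_two v
  have hsin : Real.sin (Real.arcsin v) = v := Real.sin_arcsin (by linarith) hv1
  have hreal : (∫ x in (0:ℝ)..1, (Real.arcsin (v * x)) ^ 2 / x)
      = (Real.arcsin v) ^ 2 * Real.log (2 * v)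
        - ∫ t in (0:ℝ)..(Real.arcsin v), 2 * t * Real.log (2 * Real.sin t) := by
    rw [SVV.subst1 hv0, SVV.subst2 hv0 hv1, SVV.ibp hθ0 hθπ, hsin]
  rw [hreal]
  push_cast
  rw [SVV.J_eq hθ0 hθπ, SVV.G_one_zero]
  simp only [SVV.G]
  have hpl3 : SVV.pl 3 = Li3c := rfl
  have hpl2 : SVV.pl 2 = Li2c := rfl
  rw [hpl3, hpl2]
  simp only [Complex.ofReal_one, one_mul]
  have hexp : Complex.exp (-(2 * Complex.I) * (Real.arcsin v : ℂ))
      = Complex.exp (-(2 * Complex.I * (Real.arcsin v : ℂ))) := by rw [neg_mul]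
  rw [hexp]
  push_cast
  ring
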